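/- Let B be an abelian group such that every nonzero homomorphism from B to ℤ is injective. If f : B ⊕ ℤ → ℤ is a surjective homomorphism, then ker f is isomorphic to mB for some positive integer m, where mB = {mb : b ∈ B}. -/

import Mathlib

/-- Any nontrivial additive subgroup of ℤ is isomorphic to ℤ. -/
lemma aux_subZ (H : AddSubgroup ℤ) (hH : H ≠ ⊥) : Nonempty (H ≃+ ℤ) := by
  obtain ⟨a, ha⟩ := Int.subgroup_cyclic H
  have ha' : a ≠ 0 := by
    rintro rfl
    apply hH
    rw [ha]
    simp
  have hinj : Function.Injective (zmultiplesHom ℤ a) := by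
    intro x y hxy
    simp only [zmultiplesHom_apply, smul_eq_mul] at hxy
    exact mul_right_cancel₀ ha' hxy
  have hrange : (zmultiplesHom ℤ a).range = H := by
    rw [ha, ← AddSubgroup.zmultiples_eq_closure]
    ext x
    simp [AddMonoidHom.mem_range, AddSubgroup.mem_zmultiples_iff, zmultiplesHom_apply, eq_comm]
  exact ⟨(AddEquiv.addSubgroupCongr hrange.symm).trans
    (AddMonoidHom.ofInjective hinj).symm⟩

theorem stmt15 (B : Type*) [AddCommGroup B]
    (hB : ∀ φ : B →+ ℤ, φ ≠ 0 → Function.Injective φ)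
    (f : B × ℤ →+ ℤ) (hf : Function.Surjective f) :
    ∃ m : ℤ, 0 < m ∧ Nonempty (f.ker ≃+ (zsmulAddGroupHom m : B →+ B).range) := by
  refine ⟨1, one_pos, ?_⟩
  have hr : (zsmulAddGroupHom (1 : ℤ) : B →+ B).range = ⊤ := by
    ext x
    simp [zsmulAddGroupHom]
  -- it suffices to show ker f ≃+ B
  suffices h : Nonempty (f.ker ≃+ B) by
    obtain ⟨e⟩ := h
    exact ⟨e.trans ((AddSubgroup.topEquiv (G := B)).symm.trans
      (AddEquiv.addSubgroupCongr hr.symm))⟩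
  set φ : B →+ ℤ := f.comp (AddMonoidHom.inl B ℤ) with hφdef
  set n : ℤ := f (0, 1) with hn
  have hsplit : ∀ b k, f (b, k) = φ b + k * n := by
    intro b k
    have : (b, k) = (b, 0) + k • ((0 : B), (1 : ℤ)) := by
      simp [Prod.ext_iff]
    rw [this, map_add, map_zsmul]
    simp [φ, smul_eq_mul, hn]
  by_cases hφ : φ = 0
  · -- f (b,k) = k * n, n is a unit, ker f = B × {0}
    have hs : ∀ b k, f (b, k) = k * n := by
      intro b k; rw [hsplit, hφ]; simp
    have hn1 : n = 1 ∨ n = -1 := by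
      obtain ⟨⟨b, k⟩, hbk⟩ := hf 1
      rw [hs] at hbk
      rcases Int.isUnit_iff.mp (IsUnit.of_mul_eq_one (a := n) k (by linarith [mul_comm k n])) with h | h
      · exact Or.inl h
      · exact Or.inr h
    have key : ∀ b k, (b, k) ∈ f.ker ↔ k = 0 := by
      intro b k
      rw [AddMonoidHom.mem_ker, hs]
      rcases hn1 with h | h <;> simp [h]
    refine ⟨AddEquiv.symm (AddEquiv.ofBijective
      ((AddMonoidHom.inl B ℤ).codRestrict f.ker (fun b => by simp [key])) ?_)⟩
    constructor
    · intro x y hxy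
      have h1 := Subtype.ext_iff.mp hxy
      have := congrArg Prod.fst h1
      exact this
    · rintro ⟨⟨b, k⟩, hbk⟩
      refine ⟨b, ?_⟩
      ext
      · rfl
      · exact ((key b k).mp hbk).symm
  · -- φ injective; both B and ker f are isomorphic to nontrivial subgroups of ℤ
    have hφinj := hB φ hφ
    obtain ⟨b0, hb0⟩ : ∃ b0, φ b0 ≠ 0 := by
      by_contra h
      push_neg at h
      exact hφ (AddMonoidHom.ext fun b => h b)
    -- B ≃+ φ.range ≃+ ℤ
    have hBr : φ.range ≠ ⊥ := by
      intro h
      apply hb0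
      have : φ b0 ∈ φ.range := ⟨b0, rfl⟩
      rw [h] at this
      simpa using this
    obtain ⟨eB⟩ := aux_subZ φ.range hBr
    -- the second-coordinate map on ker f
    set ψ : f.ker →+ ℤ := (AddMonoidHom.snd B ℤ).comp f.ker.subtype with hψ
    have hψinj : Function.Injective ψ := by
      rintro ⟨⟨b1, k1⟩, h1⟩ ⟨⟨b2, k2⟩, h2⟩ h12
      simp only [ψ, AddMonoidHom.coe_comp, Function.comp_apply, AddSubgroup.coe_subtype,
        AddMonoidHom.coe_snd] at h12
      subst h12
      rw [AddMonoidHom.mem_ker, hsplit] at h1 h2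
      have : φ b1 = φ b2 := by linarith
      have := hφinj this
      ext <;> simp [this]
    have hψr : ψ.range ≠ ⊥ := by
      intro h
      have hmem : ((-(n • b0), φ b0) : B × ℤ) ∈ f.ker := by
        rw [AddMonoidHom.mem_ker, hsplit]
        simp [mul_comm]
      have : ψ ⟨_, hmem⟩ ∈ ψ.range := ⟨_, rfl⟩
      rw [h] at this
      simp only [AddSubgroup.mem_bot] at this
      apply hb0
      simpa [ψ] using this
    obtain ⟨eK⟩ := aux_subZ ψ.range hψr
    exact ⟨((AddMonoidHom.ofInjective hψinj).trans eK).trans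
      (eB.symm.trans (AddMonoidHom.ofInjective hφinj).symm)⟩
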